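/- Let n ≥ 1 and let 𝒥 ∈ Mₙ(ℂ) be a fixed matrix. Let ξ₁, G : ℝ → instances of Mₙ(ℂ) be differentiable matrix-valued functions such that ξ₁(x) and G(x) are invertible for every x, and suppose G satisfies the linear equation i·G′(x) = G(x)·𝒥 − 𝒥·G(x) for all x. Set ξ₂(x) := ξ₁(x)·G(x). Then for every x ∈ ℝ, i·ξ₂′(x)·ξ₂(x)⁻¹ − ξ₂(x)·𝒥·ξ₂(x)⁻¹ = i·ξ₁′(x)·ξ₁(x)⁻¹ − ξ₁(x)·𝒥·ξ₁(x)⁻¹. In other words, the quantity g(x) = i ξ′ξ⁻¹ − ξ𝒥ξ⁻¹ built from a solution of the Riemann–Hilbert problem is the same on both sides of the contour, so it defines a single Lax potential (Zakharov–Shabat equivalence of the RHP with a Lax representation). -/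

import Mathlib

attribute [local instance] Matrix.normedAddCommGroup Matrix.normedSpace

/-- Zakharov–Shabat equivalence of the RHP with a Lax representation: if
`ξ₂ = ξ₁·G` where the sewing matrix `G` satisfies `i G′ = G𝒥 − 𝒥G`, then the
quantity `g = i ξ′ ξ⁻¹ − ξ 𝒥 ξ⁻¹` is the same for `ξ₁` and `ξ₂`. -/
theorem rhp_lax_potential (n : ℕ) (hn : 1 ≤ n)
    (𝒥 : Matrix (Fin n) (Fin n) ℂ)
    (ξ₁ G ξ₂ : ℝ → Matrix (Fin n) (Fin n) ℂ)
    (hξ₁ : Differentiable ℝ ξ₁) (hG : Differentiable ℝ G)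
    (hξ₁inv : ∀ x : ℝ, IsUnit (ξ₁ x)) (hGinv : ∀ x : ℝ, IsUnit (G x))
    (hGeq : ∀ x : ℝ, Complex.I • deriv G x = G x * 𝒥 - 𝒥 * G x)
    (hξ₂ : ∀ x : ℝ, ξ₂ x = ξ₁ x * G x) :
    ∀ x : ℝ,
      Complex.I • deriv ξ₂ x * (ξ₂ x)⁻¹ - ξ₂ x * 𝒥 * (ξ₂ x)⁻¹ =
        Complex.I • deriv ξ₁ x * (ξ₁ x)⁻¹ - ξ₁ x * 𝒥 * (ξ₁ x)⁻¹ := by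
  intro x
  -- matrix multiplication as a continuous bilinear map
  let B : (letI : AddCommGroup (Matrix (Fin n) (Fin n) ℂ) := NormedAddCommGroup.toAddCommGroup
      letI : AddCommMonoid (Matrix (Fin n) (Fin n) ℂ) := AddCommGroup.toAddCommMonoid
      letI : TopologicalSpace (Matrix (Fin n) (Fin n) ℂ) := PseudoMetricSpace.toUniformSpace.toTopologicalSpace
      letI : Module ℝ (Matrix (Fin n) (Fin n) ℂ) := NormedSpace.toModule
      Matrix (Fin n) (Fin n) ℂ →L[ℝ]
      Matrix (Fin n) (Fin n) ℂ →L[ℝ] Matrix (Fin n) (Fin n) ℂ) :=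
    LinearMap.toContinuousLinearMap
      { toFun := fun A => LinearMap.toContinuousLinearMap
          { toFun := fun C => A * C
            map_add' := fun C D => mul_add _ _ _
            map_smul' := fun c C => mul_smul_comm _ _ _ }
        map_add' := by
          intro A A'
          apply ContinuousLinearMap.ext
          intro C
          exact add_mul A A' C
        map_smul' := by
          intro c A
          apply ContinuousLinearMap.ext
          intro C
          exact smul_mul_assoc c A C }
  have hBapp : ∀ A C : Matrix (Fin n) (Fin n) ℂ, B A C = A * C := fun A C => rfl
  have hd : HasDerivAt ξ₂ (deriv ξ₁ x * G x + ξ₁ x * deriv G x) x := by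
    have hc : HasDerivAt (fun y => B (ξ₁ y)) (B (deriv ξ₁ x)) x :=
      B.hasFDerivAt.comp_hasDerivAt x (hξ₁ x).hasDerivAt
    have h2 := hc.clm_apply (hG x).hasDerivAt
    simp only [hBapp] at h2
    exact h2.congr_of_eventuallyEq (Filter.Eventually.of_forall fun y => (hξ₂ y))
  have hdξ₂ : deriv ξ₂ x = deriv ξ₁ x * G x + ξ₁ x * deriv G x := hd.deriv
  have hG1 : G x * (G x)⁻¹ = 1 :=
    Matrix.mul_nonsing_inv _ ((Matrix.isUnit_iff_isUnit_det _).mp (hGinv x))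
  have hG2 : ∀ A : Matrix (Fin n) (Fin n) ℂ, G x * ((G x)⁻¹ * A) = A := by
    intro A; rw [← mul_assoc, hG1, one_mul]
  have key : Complex.I • deriv ξ₂ x
      = Complex.I • deriv ξ₁ x * G x + ξ₁ x * (G x * 𝒥 - 𝒥 * G x) := by
    rw [hdξ₂, smul_add, ← smul_mul_assoc, ← mul_smul_comm, hGeq x]
  rw [key, hξ₂ x, Matrix.mul_inv_rev]
  simp only [mul_sub, sub_mul, add_mul, mul_assoc, hG2]
  abel
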